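/- Let V be a finite-dimensional real inner product space, φ an alternating p-form of comass one on V, and Ω ⊆ V a bounded open set. Let W be an open set containing the closure of Ω and ρ : W → ℝ a C^∞ defining function for Ω: Ω = {x ∈ W : ρ(x) < 0}, the topological boundary ∂Ω equals {x ∈ W : ρ(x) = 0}, and Dρ(x) ≠ 0 for every x ∈ ∂Ω. Assume ∂Ω is strictly φ-convex: for every x ∈ ∂Ω and every φ-plane (e₁,…,e_p) ∈ G(φ) with Dρ(x)(e_j) = 0 for all j, Σ_{j=1}^p D²ρ(x)(e_j,e_j) > 0. Then there is a compact set L ⊆ Ω such that the function x ↦ −log(−ρ(x)) is strictly φ-plurisubharmonic on Ω∖L, i.e. for every x ∈ Ω∖L and every φ-plane (e₁,…,e_p) ∈ G(φ), Σ_{j=1}^p D²(−log(−ρ))(x)(e_j,e_j) > 0. (Theorem 5.6, Euclidean case) -/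

import Mathlib

open scoped RealInnerProductSpace

noncomputable section

variable {V : Type*} [NormedAddCommGroup V] [InnerProductSpace ℝ V] [FiniteDimensional ℝ V]

/-- An alternating form on a finite-dimensional space is continuous as a function of the
tuple of vectors. -/
lemma alternatingMap_continuous_aux {p : ℕ} (φ : V [⋀^Fin p]→ₗ[ℝ] ℝ) :
    Continuous fun e : Fin p → V => φ e := by
  classical
  set n := Module.finrank ℝ V with hn
  let b : Module.Basis (Fin n) ℝ V := Module.finBasis ℝ V
  have hrepr : ∀ e : Fin p → V,
      φ.toMultilinearMap e = ∑ k : Fin p → Fin n,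
        (∏ j, b.repr (e j) (k j)) • φ.toMultilinearMap (fun j => b (k j)) := by
    intro e
    have h1 : (fun j => ∑ i, b.repr (e j) i • b i) = e :=
      funext fun j => b.sum_repr (e j)
    calc φ.toMultilinearMap e
        = φ.toMultilinearMap (fun j => ∑ i, b.repr (e j) i • b i) := by rw [h1]
      _ = ∑ k : Fin p → Fin n,
            φ.toMultilinearMap (fun j => b.repr (e j) (k j) • b (k j)) :=
          φ.toMultilinearMap.map_sum (fun j i => (b.repr (e j)) i • b i)
      _ = ∑ k : Fin p → Fin n,
            (∏ j, b.repr (e j) (k j)) • φ.toMultilinearMap (fun j => b (k j)) :=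
          Finset.sum_congr rfl fun k _ => φ.toMultilinearMap.map_smul_univ _ _
  have hc : Continuous fun e : Fin p → V => ∑ k : Fin p → Fin n,
      (∏ j, b.repr (e j) (k j)) • φ.toMultilinearMap (fun j => b (k j)) := by
    refine continuous_finset_sum _ fun k _ => Continuous.smul (f := fun e : Fin p → V => ∏ j, b.repr (e j) (k j))
      (g := fun _ : Fin p → V => φ.toMultilinearMap (fun j => b (k j))) ?_ continuous_const
    refine continuous_finset_prod _ fun j _ => ?_
    have hlin : Continuous fun y : V => (b.repr y) (k j) :=
      ((Finsupp.lapply (k j)).comp (b.repr : V →ₗ[ℝ] (Fin n →₀ ℝ))).continuous_of_finiteDimensional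
    exact hlin.comp (continuous_apply j)
  exact (hc.congr fun e => (hrepr e).symm : Continuous fun e : Fin p → V => φ.toMultilinearMap e)


private lemma aux_arith {s A B M : ℝ} (hs : 0 < s) (hB : 0 ≤ B) (hM : M * s < 1)
    (hpos : 0 < A + M * B) : 0 < s⁻¹ * A + (s ^ 2)⁻¹ * B := by
  have hnum : 0 < s * A + B := by nlinarith
  have heq : s⁻¹ * A + (s ^ 2)⁻¹ * B = (s * A + B) / s ^ 2 := by
    field_simp
  rw [heq]
  exact div_pos hnum (by positivity)

/-- Theorem 5.6 (Euclidean case): let `φ` be an alternating `p`-form of comass one, `Ω` a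
bounded open set with smooth defining function `ρ` (defined on an open set `W` containing
the closure of `Ω`) whose boundary is strictly `φ`-convex.  Then there is a compact set
`L ⊆ Ω` such that `−log(−ρ)` is strictly `φ`-plurisubharmonic on `Ω∖L`. -/
theorem neg_log_strictly_psh_near_boundary {p : ℕ} (hp : 1 ≤ p)
    (φ : V [⋀^Fin p]→ₗ[ℝ] ℝ)
    (hcomass : ∀ e : Fin p → V, Orthonormal ℝ e → φ e ≤ 1)
    (Ω W : Set V) (hΩo : IsOpen Ω) (hΩb : Bornology.IsBounded Ω) (hWo : IsOpen W)
    (hWcl : closure Ω ⊆ W)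
    (ρ : V → ℝ) (hρ : ContDiffOn ℝ (⊤ : ℕ∞) ρ W)
    (hΩdef : Ω = {x ∈ W | ρ x < 0})
    (hbdry : frontier Ω = {x ∈ W | ρ x = 0})
    (hgrad : ∀ x ∈ frontier Ω, fderiv ℝ ρ x ≠ 0)
    (hconv : ∀ x ∈ frontier Ω, ∀ e : Fin p → V, Orthonormal ℝ e → φ e = 1 →
      (∀ j, fderiv ℝ ρ x (e j) = 0) →
      0 < ∑ j, iteratedFDeriv ℝ 2 ρ x ![e j, e j]) :
    ∃ L : Set V, IsCompact L ∧ L ⊆ Ω ∧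
      ∀ x ∈ Ω \ L, ∀ e : Fin p → V, Orthonormal ℝ e → φ e = 1 →
        0 < ∑ j, iteratedFDeriv ℝ 2 (fun y => -Real.log (-ρ y)) x ![e j, e j] := by
  classical
  have hΩW : Ω ⊆ W := fun x hx => hWcl (subset_closure hx)
  have hfrW : frontier Ω ⊆ W := by rw [hbdry]; exact fun x hx => hx.1
  have hρneg : ∀ x ∈ Ω, ρ x < 0 := by
    intro x hx; rw [hΩdef] at hx; exact hx.2
  have hdiff : ∀ x ∈ W, HasFDerivAt ρ (fderiv ℝ ρ x) x := fun x hx =>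
    ((hρ.contDiffAt (hWo.mem_nhds hx)).differentiableAt (by simp)).hasFDerivAt
  have hF1cd : ContDiffOn ℝ (⊤ : ℕ∞) (fderiv ℝ ρ) W := hρ.fderiv_of_isOpen hWo (by simp)
  have hF1d : ∀ x ∈ W, HasFDerivAt (fderiv ℝ ρ) (fderiv ℝ (fderiv ℝ ρ) x) x := fun x hx =>
    ((hF1cd.contDiffAt (hWo.mem_nhds hx)).differentiableAt (by simp)).hasFDerivAt
  have hF1cont : ContinuousOn (fderiv ℝ ρ) W := hρ.continuousOn_fderiv_of_isOpen hWo (by simp)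
  have hF2cont : ContinuousOn (fderiv ℝ (fderiv ℝ ρ)) W :=
    hF1cd.continuousOn_fderiv_of_isOpen hWo (by simp)
  -- first derivative of `g = -log(-ρ)` on `Ω`
  have hg1 : ∀ x ∈ Ω, HasFDerivAt (fun y => -Real.log (-ρ y))
      ((-ρ x)⁻¹ • fderiv ℝ ρ x) x := by
    intro x hx
    have h0 : -ρ x ≠ 0 := ne_of_gt (neg_pos.2 (hρneg x hx))
    have h := (((hdiff x (hΩW hx)).neg).log h0).neg
    refine h.congr_fderiv ?_
    simp [smul_neg, neg_neg]
  have hgeq : ∀ y ∈ Ω, fderiv ℝ (fun y => -Real.log (-ρ y)) y = (-ρ y)⁻¹ • fderiv ℝ ρ y :=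
    fun y hy => (hg1 y hy).fderiv
  -- second derivative formula on `Ω`
  have key : ∀ x ∈ Ω, ∀ v : V,
      iteratedFDeriv ℝ 2 (fun y => -Real.log (-ρ y)) x ![v, v]
        = (-ρ x)⁻¹ * fderiv ℝ (fderiv ℝ ρ) x v v
          + ((-ρ x) ^ 2)⁻¹ * (fderiv ℝ ρ x v * fderiv ℝ ρ x v) := by
    intro x hx v
    have h0 : -ρ x ≠ 0 := ne_of_gt (neg_pos.2 (hρneg x hx))
    have hc : HasFDerivAt (fun y => (-ρ y)⁻¹)
        ((-((-ρ x) ^ 2)⁻¹) • (-(fderiv ℝ ρ x))) x := by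
      have := (hasDerivAt_inv h0).comp_hasFDerivAt x ((hdiff x (hΩW hx)).neg)
      refine this.congr_fderiv ?_
      simp
    have hsm := hc.smul (hF1d x (hΩW hx))
    have hev : fderiv ℝ (fun y => -Real.log (-ρ y))
        =ᶠ[nhds x] fun y => (-ρ y)⁻¹ • fderiv ℝ ρ y :=
      Filter.eventuallyEq_of_mem (hΩo.mem_nhds hx) hgeq
    have h2 : fderiv ℝ (fderiv ℝ (fun y => -Real.log (-ρ y))) x
        = (-ρ x)⁻¹ • fderiv ℝ (fderiv ℝ ρ) x
          + ((-((-ρ x) ^ 2)⁻¹) • (-(fderiv ℝ ρ x))).smulRight (fderiv ℝ ρ x) := by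
      rw [hev.fderiv_eq]; exact hsm.fderiv
    rw [iteratedFDeriv_two_apply, h2]
    simp only [ContinuousLinearMap.add_apply, ContinuousLinearMap.coe_smul',
      Pi.smul_apply, ContinuousLinearMap.smulRight_apply, ContinuousLinearMap.neg_apply,
      smul_eq_mul, Matrix.cons_val_zero, Matrix.cons_val_one, Matrix.head_cons]
    ring
  -- restatement of convexity hypothesis via second fderiv
  have hconv' : ∀ x ∈ frontier Ω, ∀ e : Fin p → V, Orthonormal ℝ e → φ e = 1 →
      (∀ j, fderiv ℝ ρ x (e j) = 0) →
      0 < ∑ j, fderiv ℝ (fderiv ℝ ρ) x (e j) (e j) := by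
    intro x hx e he hφe hz
    have h := hconv x hx e he hφe hz
    simpa [iteratedFDeriv_two_apply] using h
  -- continuity of the relevant functions on `W ×ˢ univ`
  have hQo : IsOpen (W ×ˢ (Set.univ : Set (Fin p → V))) := hWo.prod isOpen_univ
  have h2j : ∀ j : Fin p, ContinuousOn (fun q : V × (Fin p → V) => q.2 j)
      (W ×ˢ (Set.univ : Set (Fin p → V))) := fun j =>
    ((continuous_apply j).comp continuous_snd).continuousOn
  have hAc : ContinuousOn
      (fun q : V × (Fin p → V) => ∑ j, fderiv ℝ (fderiv ℝ ρ) q.1 (q.2 j) (q.2 j))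
      (W ×ˢ (Set.univ : Set (Fin p → V))) := by
    refine continuousOn_finset_sum _ fun j _ => ?_
    have h1 : ContinuousOn (fun q : V × (Fin p → V) => fderiv ℝ (fderiv ℝ ρ) q.1)
        (W ×ˢ (Set.univ : Set (Fin p → V))) :=
      hF2cont.comp continuousOn_fst fun q hq => hq.1
    exact (h1.clm_apply (h2j j)).clm_apply (h2j j)
  have hBc : ContinuousOn
      (fun q : V × (Fin p → V) => ∑ j, (fderiv ℝ ρ q.1 (q.2 j)) ^ 2)
      (W ×ˢ (Set.univ : Set (Fin p → V))) := by
    refine continuousOn_finset_sum _ fun j _ => ?_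
    have h1 : ContinuousOn (fun q : V × (Fin p → V) => fderiv ℝ ρ q.1)
        (W ×ˢ (Set.univ : Set (Fin p → V))) :=
      hF1cont.comp continuousOn_fst fun q hq => hq.1
    exact (h1.clm_apply (h2j j)).pow 2
  -- the compact set of boundary points times `φ`-planes
  have hGclosed : IsClosed {e : Fin p → V | Orthonormal ℝ e ∧ φ e = 1} := by
    have h1 : {e : Fin p → V | Orthonormal ℝ e}
        = ⋂ (i) (j), {e : Fin p → V | (⟪e i, e j⟫ : ℝ) = if i = j then 1 else 0} := by
      ext e
      simp only [Set.mem_setOf_eq, Set.mem_iInter, orthonormal_iff_ite]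
    have h2 : IsClosed {e : Fin p → V | Orthonormal ℝ e} := by
      rw [h1]
      exact isClosed_iInter fun i => isClosed_iInter fun j =>
        isClosed_eq (Continuous.inner (continuous_apply i) (continuous_apply j))
          continuous_const
    exact h2.inter (isClosed_eq (alternatingMap_continuous_aux φ) continuous_const)
  have hGbdd : Bornology.IsBounded {e : Fin p → V | Orthonormal ℝ e ∧ φ e = 1} := by
    refine (Metric.isBounded_closedBall (x := (0 : Fin p → V)) (r := 1)).subset ?_
    intro e he
    rw [Metric.mem_closedBall, dist_zero_right]
    exact (pi_norm_le_iff_of_nonneg zero_le_one).2 fun j => le_of_eq (he.1.1 j)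
  have hGcomp : IsCompact {e : Fin p → V | Orthonormal ℝ e ∧ φ e = 1} :=
    Metric.isCompact_iff_isClosed_bounded.mpr ⟨hGclosed, hGbdd⟩
  have hfrcomp : IsCompact (frontier Ω) :=
    Metric.isCompact_iff_isClosed_bounded.mpr
      ⟨isClosed_frontier, hΩb.closure.subset frontier_subset_closure⟩
  -- the open cover
  set Un : ℕ → Set (V × (Fin p → V)) := fun n =>
    (W ×ˢ (Set.univ : Set (Fin p → V))) ∩
      (fun q : V × (Fin p → V) =>
        (∑ j, fderiv ℝ (fderiv ℝ ρ) q.1 (q.2 j) (q.2 j))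
          + ((n : ℝ) + 1) * ∑ j, (fderiv ℝ ρ q.1 (q.2 j)) ^ 2) ⁻¹' Set.Ioi 0
    with hUndef
  have hUnopen : ∀ n, IsOpen (Un n) := fun n =>
    ContinuousOn.isOpen_inter_preimage (hAc.add (continuousOn_const.mul hBc)) hQo isOpen_Ioi
  have hUnmem : ∀ n (q : V × (Fin p → V)), q ∈ Un n ↔
      (q.1 ∈ W ∧ 0 < (∑ j, fderiv ℝ (fderiv ℝ ρ) q.1 (q.2 j) (q.2 j))
        + ((n : ℝ) + 1) * ∑ j, (fderiv ℝ ρ q.1 (q.2 j)) ^ 2) := by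
    intro n q
    simp [hUndef, Set.mem_prod]
  have hcover : (frontier Ω ×ˢ {e : Fin p → V | Orthonormal ℝ e ∧ φ e = 1})
      ⊆ ⋃ n, Un n := by
    rintro ⟨x, e⟩ ⟨hx, he⟩
    by_cases hB : (∑ j, (fderiv ℝ ρ x (e j)) ^ 2) = 0
    · have hz : ∀ j, fderiv ℝ ρ x (e j) = 0 := by
        intro j
        have hj := (Finset.sum_eq_zero_iff_of_nonneg fun j _ => sq_nonneg _).1 hB j
          (Finset.mem_univ j)
        exact (pow_eq_zero_iff two_ne_zero).1 hj
      have hA := hconv' x hx e he.1 he.2 hz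
      refine Set.mem_iUnion.2 ⟨0, (hUnmem 0 (x, e)).2 ⟨hfrW hx, ?_⟩⟩
      simp only [hB]
      simpa using hA
    · have hBpos : 0 < ∑ j, (fderiv ℝ ρ x (e j)) ^ 2 :=
        lt_of_le_of_ne (Finset.sum_nonneg fun j _ => sq_nonneg _) (Ne.symm hB)
      obtain ⟨n, hn⟩ := exists_nat_gt
        ((-(∑ j, fderiv ℝ (fderiv ℝ ρ) x (e j) (e j))) / ∑ j, (fderiv ℝ ρ x (e j)) ^ 2)
      refine Set.mem_iUnion.2 ⟨n, (hUnmem n (x, e)).2 ⟨hfrW hx, ?_⟩⟩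
      rw [div_lt_iff₀ hBpos] at hn
      nlinarith [hBpos]
  obtain ⟨t, ht⟩ := (hfrcomp.prod hGcomp).elim_finite_subcover Un hUnopen hcover
  set N := t.sup id with hNdef
  have hM : (0 : ℝ) < (N : ℝ) + 1 := by positivity
  have hKU : (frontier Ω ×ˢ {e : Fin p → V | Orthonormal ℝ e ∧ φ e = 1}) ⊆ Un N := by
    intro q hq
    have hq' := ht hq
    simp only [Set.mem_iUnion, exists_prop] at hq'
    obtain ⟨n, hn, hqn⟩ := hq'
    rw [hUnmem n q] at hqn
    refine (hUnmem N q).2 ⟨hqn.1, ?_⟩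
    have hnN : (n : ℝ) ≤ (N : ℝ) := Nat.cast_le.2 (Finset.le_sup (f := id) hn)
    have hBq : 0 ≤ ∑ j, (fderiv ℝ ρ q.1 (q.2 j)) ^ 2 :=
      Finset.sum_nonneg fun j _ => sq_nonneg _
    nlinarith [hqn.2]
  obtain ⟨u, v, huo, hvo, hfru, hGv, huv⟩ :=
    generalized_tube_lemma hfrcomp hGcomp (hUnopen N) hKU
  have hO₂o : IsOpen (W ∩ ρ ⁻¹' Set.Ioi (-(1 / ((N : ℝ) + 1)))) :=
    ContinuousOn.isOpen_inter_preimage hρ.continuousOn hWo isOpen_Ioi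
  refine ⟨closure Ω \ (u ∩ (W ∩ ρ ⁻¹' Set.Ioi (-(1 / ((N : ℝ) + 1))))), ?_, ?_, ?_⟩
  · exact Metric.isCompact_iff_isClosed_bounded.mpr
      ⟨isClosed_closure.sdiff (huo.inter hO₂o), hΩb.closure.subset Set.diff_subset⟩
  · rintro x ⟨hxcl, hxn⟩
    have hx' : x ∈ interior Ω ∪ frontier Ω := by
      rw [← closure_eq_interior_union_frontier]; exact hxcl
    rcases hx' with h | h
    · rwa [hΩo.interior_eq] at h
    · exfalso
      apply hxn
      refine ⟨hfru h, hfrW h, ?_⟩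
      have hρx : ρ x = 0 := by rw [hbdry] at h; exact h.2
      simp only [Set.mem_preimage, Set.mem_Ioi, hρx]
      rw [neg_lt, neg_zero]
      positivity
  · rintro x ⟨hxΩ, hxL⟩ e he hφe
    have hxmem : x ∈ u ∩ (W ∩ ρ ⁻¹' Set.Ioi (-(1 / ((N : ℝ) + 1)))) := by
      by_contra h
      exact hxL ⟨subset_closure hxΩ, h⟩
    have heG : e ∈ {e : Fin p → V | Orthonormal ℝ e ∧ φ e = 1} := ⟨he, hφe⟩
    have hqU : (x, e) ∈ Un N := huv (Set.mk_mem_prod hxmem.1 (hGv heG))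
    have hpos : 0 < (∑ j, fderiv ℝ (fderiv ℝ ρ) x (e j) (e j))
        + ((N : ℝ) + 1) * ∑ j, (fderiv ℝ ρ x (e j)) ^ 2 :=
      ((hUnmem N (x, e)).1 hqU).2
    have hs : 0 < -ρ x := neg_pos.2 (hρneg x hxΩ)
    have hsM : -ρ x < 1 / ((N : ℝ) + 1) := by
      have h1 : -(1 / ((N : ℝ) + 1)) < ρ x := hxmem.2.2
      linarith
    have hsum : ∑ j, iteratedFDeriv ℝ 2 (fun y => -Real.log (-ρ y)) x ![e j, e j]
        = (-ρ x)⁻¹ * (∑ j, fderiv ℝ (fderiv ℝ ρ) x (e j) (e j))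
          + ((-ρ x) ^ 2)⁻¹ * ∑ j, (fderiv ℝ ρ x (e j)) ^ 2 := by
      rw [Finset.mul_sum, Finset.mul_sum, ← Finset.sum_add_distrib]
      refine Finset.sum_congr rfl fun j _ => ?_
      rw [key x hxΩ (e j)]
      ring
    rw [hsum]
    have hB : 0 ≤ ∑ j, (fderiv ℝ ρ x (e j)) ^ 2 :=
      Finset.sum_nonneg fun j _ => sq_nonneg _
    have hsM' : ((N : ℝ) + 1) * (-ρ x) < 1 := by
      rw [lt_div_iff₀ hM] at hsM
      linarith [hsM]
    exact aux_arith hs hB hsM' hpos
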